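/- Let p_θ(x^n) = ∏_{i=1}^n (2π)^{-1/2} exp(−(x_i−θ)²/2), let n* ≥ 1 (the anticipated sample size), and for each θ ∈ ℝ define the two-point prior-based e-variable S_θ(x^n) := ( (1/2) p_{θ−√(2/n*)}(x^n) + (1/2) p_{θ+√(2/n*)}(x^n) ) / p_θ(x^n), with e-posterior P̄(θ|x^n) := 1/S_θ(x^n). Let θ̂ = n^{-1}∑_{i=1}^n x_i. Then for every x^n ∈ ℝ^n: sup_{θ∈ℝ} (θ−θ̂)² · P̄(θ|x^n) = (1/n) · (n*/n) · e^{n/n*} · sup_{x∈ℝ} x²/(e^x + e^{−x}). -/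

import Mathlib

open MeasureTheory Real

/-- Equation (superbound): for the two-point prior-based e-posterior for the normal
location family with anticipated sample size `n*`,
`sup_θ (θ−θ̂)² · P̄(θ ∣ xⁿ) = (1/n)(n*/n) e^{n/n*} · sup_t t²/(eᵗ+e⁻ᵗ)`. -/
theorem twopoint_eposterior_squared_error_risk
    (n nstar : ℕ) (hn : 1 ≤ n) (hnstar : 1 ≤ nstar)
    -- the density of `n` i.i.d. `N(θ,1)` observations
    (p : ℝ → (Fin n → ℝ) → ℝ)
    (hp : ∀ θ x, p θ x = ∏ i, (2 * π) ^ (-(1 : ℝ) / 2) * exp (-(x i - θ) ^ 2 / 2))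
    -- the two-point prior-based e-variable, with mass 1/2 on each of `θ ± √(2/n*)`
    (S : ℝ → (Fin n → ℝ) → ℝ)
    (hS : ∀ θ x, S θ x =
      ((1 / 2) * p (θ - Real.sqrt (2 / (nstar : ℝ))) x
        + (1 / 2) * p (θ + Real.sqrt (2 / (nstar : ℝ))) x) / p θ x)
    -- the data and the MLE
    (x : Fin n → ℝ)
    (θhat : ℝ) (hθhat : θhat = (∑ i, x i) / n) :
    (⨆ θ : ℝ, (θ - θhat) ^ 2 * (S θ x)⁻¹)
      = (1 / (n : ℝ)) * ((nstar : ℝ) / n) * exp ((n : ℝ) / nstar)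
          * ⨆ t : ℝ, t ^ 2 / (exp t + exp (-t)) := by
  have hn0 : (0:ℝ) < n := by exact_mod_cast hn
  have hns0 : (0:ℝ) < nstar := by exact_mod_cast hnstar
  set δ : ℝ := Real.sqrt (2 / (nstar : ℝ)) with hδdef
  have hδpos : 0 < δ := Real.sqrt_pos.2 (by positivity)
  have hδsq : δ ^ 2 = 2 / nstar := Real.sq_sqrt (by positivity)
  set A : ℝ := ∏ i, ((2 * π) ^ (-(1:ℝ)/2) * exp (-(x i) ^ 2 / 2)) with hA
  have hApos : 0 < A := by
    apply Finset.prod_pos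
    intro i _
    have h2π : (0:ℝ) < 2 * π := by positivity
    positivity
  have hpform : ∀ θ : ℝ, p θ x = A * exp (θ * (θhat * n) - n * θ ^ 2 / 2) := by
    intro θ
    have hsum : (∑ i, x i) = θhat * n := by rw [hθhat]; field_simp
    rw [hp]
    calc (∏ i, (2*π) ^ (-(1:ℝ)/2) * exp (-(x i - θ)^2/2))
        = ∏ i, ((2*π) ^ (-(1:ℝ)/2) * exp (-(x i)^2/2)) * exp (x i * θ - θ^2/2) := by
          refine Finset.prod_congr rfl fun i _ => ?_
          rw [mul_assoc, ← Real.exp_add]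
          congr 1
          ring
      _ = A * ∏ i, exp (x i * θ - θ^2/2) := by rw [Finset.prod_mul_distrib]
      _ = A * exp (∑ i, (x i * θ - θ^2/2)) := by rw [Real.exp_sum]
      _ = A * exp (θ * (θhat * n) - n * θ ^ 2 / 2) := by
          congr 1
          rw [Finset.sum_sub_distrib, ← Finset.sum_mul, Finset.sum_const,
            Finset.card_fin, nsmul_eq_mul, hsum]
          ring
  have hδ2 : (n:ℝ) * δ ^ 2 / 2 = n / nstar := by
    rw [hδsq]; field_simp
  have key : ∀ θ : ℝ, (θ - θhat) ^ 2 * (S θ x)⁻¹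
      = (1 / (n : ℝ)) * ((nstar : ℝ) / n) * exp ((n : ℝ) / nstar) *
        ((n * δ * (θhat - θ)) ^ 2
          / (exp (n * δ * (θhat - θ)) + exp (-(n * δ * (θhat - θ))))) := by
    intro θ
    set u : ℝ := n * δ * (θhat - θ) with hu
    have hexpP : (θ + δ) * (θhat * n) - n * (θ + δ) ^ 2 / 2
        = u - n / nstar + (θ * (θhat * n) - n * θ ^ 2 / 2) := by
      rw [hu]; linear_combination -hδ2
    have hexpM : (θ - δ) * (θhat * n) - n * (θ - δ) ^ 2 / 2
        = -u - n / nstar + (θ * (θhat * n) - n * θ ^ 2 / 2) := by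
      rw [hu]; linear_combination -hδ2
    have hSval : S θ x = (1/2) * exp (-((n:ℝ)/nstar)) * (exp u + exp (-u)) := by
      rw [hS, hpform, hpform, hpform, hexpP, hexpM, Real.exp_add, Real.exp_add]
      have hE : exp (θ * (θhat * n) - n * θ ^ 2 / 2) ≠ 0 := Real.exp_ne_zero _
      have h1 : exp (u - (n:ℝ)/nstar) = exp u * exp (-((n:ℝ)/nstar)) := by
        rw [← Real.exp_add]; congr 1
      have h2 : exp (-u - (n:ℝ)/nstar) = exp (-u) * exp (-((n:ℝ)/nstar)) := by
        rw [← Real.exp_add]; congr 1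
      rw [h1, h2]
      field_simp
      ring
    have hsq : (θ - θhat) ^ 2 = u ^ 2 * (nstar / (2 * (n:ℝ) ^ 2)) := by
      rw [hu]
      have h2 : ((n:ℝ) * δ * (θhat - θ)) ^ 2 = (n:ℝ)^2 * (2/(nstar:ℝ)) * (θhat - θ)^2 := by
        rw [mul_pow, mul_pow, hδsq]
      rw [h2]
      field_simp [hn0.ne', hns0.ne']
      ring
    rw [hSval, hsq]
    have hEpos : 0 < exp u + exp (-u) := by positivity
    have hinv : exp (-((n:ℝ)/nstar)) = (exp ((n:ℝ)/nstar))⁻¹ := Real.exp_neg _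
    rw [hinv]
    have hexppos : 0 < exp ((n:ℝ)/nstar) := Real.exp_pos _
    field_simp
  simp_rw [key]
  rw [← Real.mul_iSup_of_nonneg (by positivity)]
  congr 1
  have hcoef : (n:ℝ) * δ ≠ 0 := by positivity
  have hsurj : Function.Surjective (fun θ : ℝ => (n:ℝ) * δ * (θhat - θ)) := by
    intro t
    refine ⟨θhat - t / ((n:ℝ) * δ), ?_⟩
    field_simp
    ring
  exact hsurj.iSup_comp (fun t => t ^ 2 / (exp t + exp (-t)))
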